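/- Let X and Y be graphs with adjacency spectral idempotents E_1,…,E_ℓ and F_1,…,F_k respectively. Then the average mixing matrix of the Cartesian product X□Y dominates the Kronecker product of the average mixing matrices: M̂(X□Y) − M̂(X)⊗M̂(Y) is positive semidefinite. -/

import Mathlib

open Matrix Kronecker

section Aux

variable {N : Type*} [Fintype N] [DecidableEq N]

private lemma posSemidef_sum' {ι : Type*} [DecidableEq ι] (s : Finset ι)
    (f : ι → Matrix N N ℝ) (h : ∀ i ∈ s, (f i).PosSemidef) :
    (∑ i ∈ s, f i).PosSemidef := by
  classical
  induction s using Finset.induction_on with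
  | empty => simpa using (Matrix.PosSemidef.zero : (0 : Matrix N N ℝ).PosSemidef)
  | @insert a s ha ih =>
    rw [Finset.sum_insert ha]
    exact (h _ (Finset.mem_insert_self _ _)).add
      (ih fun i hi => h i (Finset.mem_insert_of_mem hi))

/-- The Schur product theorem over ℝ. -/
private lemma schur_psd {M P : Matrix N N ℝ} (hM : M.PosSemidef) (hP : P.PosSemidef) :
    (M.hadamard P).PosSemidef := by
  obtain ⟨B, hB⟩ : ∃ B : Matrix N N ℝ, P = Bᴴ * B := by
    open scoped MatrixOrder in
    obtain ⟨X, hX, -, hXP⟩ := CFC.exists_sqrt_of_isSelfAdjoint_of_quasispectrumRestricts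
      hP.isHermitian (QuasispectrumRestricts.nnreal_of_nonneg hP.nonneg)
    exact ⟨X, by rw [← hXP]; nth_rewrite 1 [← hX.star_eq]; rfl⟩
  refine Matrix.PosSemidef.of_dotProduct_mulVec_nonneg ?_ ?_
  · ext i j
    have h1 : M j i = M i j := by
      have := congrFun (congrFun hM.1 i) j
      simpa using this
    have h2 : P j i = P i j := by
      have := congrFun (congrFun hP.1 i) j
      simpa using this
    simp [Matrix.conjTranspose_apply, Matrix.hadamard_apply, h1, h2]
  · intro x
    have key : star x ⬝ᵥ (M.hadamard P) *ᵥ x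
        = ∑ t, star (fun i => B t i * x i) ⬝ᵥ M *ᵥ (fun i => B t i * x i) := by
      subst hB
      have L : star x ⬝ᵥ (M.hadamard (Bᴴ * B)) *ᵥ x
          = ∑ i, ∑ j, ∑ t, x i * M i j * B t i * B t j * x j := by
        simp only [dotProduct, mulVec, Matrix.hadamard_apply, Matrix.mul_apply,
          Matrix.conjTranspose_apply, star_trivial, Finset.mul_sum, Finset.sum_mul]
        refine Finset.sum_congr rfl fun i _ => Finset.sum_congr rfl fun j _ =>
          Finset.sum_congr rfl fun t _ => by ring
      have R : ∑ t, star (fun i => B t i * x i) ⬝ᵥ M *ᵥ (fun i => B t i * x i)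
          = ∑ t, ∑ i, ∑ j, x i * M i j * B t i * B t j * x j := by
        simp only [dotProduct, mulVec, star_trivial, Finset.mul_sum, Finset.sum_mul]
        refine Finset.sum_congr rfl fun t _ => Finset.sum_congr rfl fun i _ =>
          Finset.sum_congr rfl fun j _ => by ring
      rw [L, R]
      exact (Finset.sum_congr rfl fun i _ => Finset.sum_comm).trans Finset.sum_comm
    rw [key]
    exact Finset.sum_nonneg fun t _ => hM.dotProduct_mulVec_nonneg _

private lemma hadamard_sum_sum {ι : Type*} (s : Finset ι) (f : ι → Matrix N N ℝ) :
    (∑ i ∈ s, f i).hadamard (∑ j ∈ s, f j) = ∑ i ∈ s, ∑ j ∈ s, (f i).hadamard (f j) := by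
  ext a b
  simp only [Matrix.sum_apply, Matrix.hadamard_apply]
  rw [Finset.sum_mul_sum]

/-- A symmetric idempotent real matrix is PSD. -/
private lemma symm_idem_psd {M : Matrix N N ℝ} (hs : M.IsSymm) (hi : M * M = M) :
    M.PosSemidef := by
  have h : M = Mᴴ * M := by
    have hct : Mᴴ = M := by
      ext i j
      simp [Matrix.conjTranspose_apply, hs.apply]
    rw [hct, hi]
  rw [h]
  exact Matrix.posSemidef_conjTranspose_mul_self M

end Aux

theorem avg_mixing_cartesian_product {n m l k p : ℕ}
    (A : Matrix (Fin n) (Fin n) ℝ) (B : Matrix (Fin m) (Fin m) ℝ)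
    (E : Fin l → Matrix (Fin n) (Fin n) ℝ) (lam : Fin l → ℝ)
    (F : Fin k → Matrix (Fin m) (Fin m) ℝ) (mu : Fin k → ℝ)
    (G : Fin p → Matrix (Fin n × Fin m) (Fin n × Fin m) ℝ) (nu : Fin p → ℝ)
    (hEsym : ∀ r, (E r).IsSymm) (hEidem : ∀ r, E r * E r = E r)
    (hEorth : ∀ r s, r ≠ s → E r * E s = 0) (hEsum : ∑ r, E r = 1)
    (hAdec : A = ∑ r, lam r • E r) (hlam : Function.Injective lam)
    (hFsym : ∀ r, (F r).IsSymm) (hFidem : ∀ r, F r * F r = F r)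
    (hForth : ∀ r s, r ≠ s → F r * F s = 0) (hFsum : ∑ r, F r = 1)
    (hBdec : B = ∑ r, mu r • F r) (hmu : Function.Injective mu)
    (hGsym : ∀ r, (G r).IsSymm) (hGidem : ∀ r, G r * G r = G r)
    (hGorth : ∀ r s, r ≠ s → G r * G s = 0) (hGsum : ∑ r, G r = 1)
    (hCdec : A ⊗ₖ (1 : Matrix (Fin m) (Fin m) ℝ) +
        (1 : Matrix (Fin n) (Fin n) ℝ) ⊗ₖ B = ∑ r, nu r • G r)
    (hnu : Function.Injective nu) :
    ((∑ r, (G r).hadamard (G r)) -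
        (∑ r, (E r).hadamard (E r)) ⊗ₖ (∑ r, (F r).hadamard (F r))).PosSemidef := by
  classical
  set C : Matrix (Fin n × Fin m) (Fin n × Fin m) ℝ :=
    A ⊗ₖ (1 : Matrix (Fin m) (Fin m) ℝ) + (1 : Matrix (Fin n) (Fin n) ℝ) ⊗ₖ B with hC
  set H : Fin l × Fin k → Matrix (Fin n × Fin m) (Fin n × Fin m) ℝ :=
    fun q => E q.1 ⊗ₖ F q.2 with hHdef
  set θ : Fin l × Fin k → ℝ := fun q => lam q.1 + mu q.2 with hθdef
  -- A * E r = lam r • E r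
  have hAE : ∀ r, A * E r = lam r • E r := by
    intro r
    rw [hAdec, Finset.sum_mul, Finset.sum_eq_single r]
    · rw [smul_mul_assoc, hEidem]
    · intro b _ hb; rw [smul_mul_assoc, hEorth b r hb, smul_zero]
    · simp
  have hBF : ∀ s, B * F s = mu s • F s := by
    intro s
    rw [hBdec, Finset.sum_mul, Finset.sum_eq_single s]
    · rw [smul_mul_assoc, hFidem]
    · intro b _ hb; rw [smul_mul_assoc, hForth b s hb, smul_zero]
    · simp
  -- C * H q = θ q • H q
  have hCH : ∀ q, C * H q = θ q • H q := by
    intro q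
    show (A ⊗ₖ (1 : Matrix (Fin m) (Fin m) ℝ) + (1 : Matrix (Fin n) (Fin n) ℝ) ⊗ₖ B) *
        (E q.1 ⊗ₖ F q.2) = (lam q.1 + mu q.2) • (E q.1 ⊗ₖ F q.2)
    rw [Matrix.add_mul, ← Matrix.mul_kronecker_mul, ← Matrix.mul_kronecker_mul,
      Matrix.one_mul, Matrix.one_mul, hAE, hBF, Matrix.smul_kronecker,
      Matrix.kronecker_smul, ← add_smul]
  -- G i * C = nu i • G i
  have hGC : ∀ i, G i * C = nu i • G i := by
    intro i
    have hC' : C = ∑ r, nu r • G r := hCdec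
    rw [hC', Finset.mul_sum, Finset.sum_eq_single i]
    · rw [mul_smul_comm, hGidem]
    · intro b _ hb; rw [mul_smul_comm, hGorth i b (Ne.symm hb), smul_zero]
    · simp
  -- if θ q ≠ nu i then G i * H q = 0
  have hGH0 : ∀ i q, θ q ≠ nu i → G i * H q = 0 := by
    intro i q hne
    have h1 : nu i • (G i * H q) = θ q • (G i * H q) := by
      calc nu i • (G i * H q) = (nu i • G i) * H q := (smul_mul_assoc _ _ _).symm
        _ = (G i * C) * H q := by rw [hGC]
        _ = G i * (C * H q) := Matrix.mul_assoc _ _ _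
        _ = G i * (θ q • H q) := by rw [hCH]
        _ = θ q • (G i * H q) := mul_smul_comm _ _ _
    have h2 : (nu i - θ q) • (G i * H q) = 0 := by
      rw [sub_smul, h1, sub_self]
    rcases smul_eq_zero.mp h2 with h | h
    · exact absurd (sub_eq_zero.mp h).symm hne
    · exact h
  -- if θ q = nu i then G i * H q = H q
  have hGH1 : ∀ i q, θ q = nu i → G i * H q = H q := by
    intro i q heq
    have hsum : ∑ j, G j * H q = H q := by
      rw [← Finset.sum_mul, hGsum, Matrix.one_mul]
    rw [Finset.sum_eq_single i] at hsum
    · exact hsum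
    · intro b _ hb
      apply hGH0
      rw [heq]
      exact fun hh => hb (hnu hh).symm
    · simp
  -- ∑ q, H q = 1
  have hHsum : ∑ q, H q = 1 := by
    simp only [hHdef]
    rw [← Matrix.one_kronecker_one (α := ℝ), ← hEsum, ← hFsum]
    ext ⟨a, b⟩ ⟨c, d⟩
    simp only [Matrix.sum_apply, Matrix.kroneckerMap_apply, Fintype.sum_prod_type]
    rw [Finset.sum_mul_sum]
  -- spectral decomposition of G i
  set S : Fin p → Finset (Fin l × Fin k) :=
    fun i => Finset.univ.filter (fun q => θ q = nu i) with hSdef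
  have hGdec : ∀ i, G i = ∑ q ∈ S i, H q := by
    intro i
    calc G i = G i * ∑ q, H q := by rw [hHsum, Matrix.mul_one]
      _ = ∑ q, G i * H q := Finset.mul_sum _ _ _
      _ = ∑ q ∈ S i, G i * H q := by
          rw [hSdef]
          exact (Finset.sum_filter_of_ne (fun q _ hne => by
            by_contra hq
            exact hne (hGH0 i q hq))).symm
      _ = ∑ q ∈ S i, H q := Finset.sum_congr rfl fun q hq => by
          rw [hSdef] at hq
          exact hGH1 i q (Finset.mem_filter.mp hq).2
  -- PSD of H q
  have hHpsd : ∀ q, (H q).PosSemidef := by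
    intro q
    apply symm_idem_psd
    · apply Matrix.IsSymm.ext
      intro ⟨a, b⟩ ⟨c, d⟩
      simp only [hHdef, Matrix.kroneckerMap_apply]
      rw [(hEsym q.1).apply, (hFsym q.2).apply]
    · show (E q.1 ⊗ₖ F q.2) * (E q.1 ⊗ₖ F q.2) = E q.1 ⊗ₖ F q.2
      rw [← Matrix.mul_kronecker_mul, hEidem, hFidem]
  -- rewrite the subtracted term as a sum over all pairs
  have hsplit : (∑ r, (E r).hadamard (E r)) ⊗ₖ (∑ r, (F r).hadamard (F r))
      = ∑ q : Fin l × Fin k, (H q).hadamard (H q) := by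
    ext ⟨a, b⟩ ⟨c, d⟩
    simp only [Matrix.sum_apply, Matrix.kroneckerMap_apply, Matrix.hadamard_apply,
      hHdef, Fintype.sum_prod_type]
    rw [Finset.sum_mul_sum]
    refine Finset.sum_congr rfl fun r _ => Finset.sum_congr rfl fun s _ => by ring
  -- the pairs not covered by any S i contribute zero
  have hHzero : ∀ q, (∀ i, θ q ≠ nu i) → H q = 0 := by
    intro q hq
    have hsum : ∑ j, G j * H q = H q := by
      rw [← Finset.sum_mul, hGsum, Matrix.one_mul]
    rw [← hsum]
    exact Finset.sum_eq_zero fun j _ => hGH0 j q (hq j)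
  -- partition the sum over all pairs
  have hpart : ∑ q : Fin l × Fin k, (H q).hadamard (H q)
      = ∑ i, ∑ q ∈ S i, (H q).hadamard (H q) := by
    have hcover : ∑ q : Fin l × Fin k, (H q).hadamard (H q)
        = ∑ q ∈ Finset.univ.filter (fun q => ∃ i, θ q = nu i), (H q).hadamard (H q) := by
      refine (Finset.sum_filter_of_ne (fun q _ hne => ?_)).symm
      by_contra hq
      push_neg at hq
      exact hne (by rw [hHzero q hq]; ext a b; simp [Matrix.hadamard_apply])
    rw [hcover]
    have hbU : Finset.univ.filter (fun q => ∃ i, θ q = nu i)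
        = Finset.univ.biUnion S := by
      ext q
      simp [hSdef, Finset.mem_biUnion]
    rw [hbU]
    refine Finset.sum_biUnion ?_
    intro i _ j _ hij
    simp only [Finset.disjoint_left, hSdef, Finset.mem_filter]
    rintro q ⟨-, h1⟩ ⟨-, h2⟩
    exact hij (hnu (h1 ▸ h2))
  -- rewrite the whole expression
  have hmain : (∑ r, (G r).hadamard (G r)) -
      (∑ r, (E r).hadamard (E r)) ⊗ₖ (∑ r, (F r).hadamard (F r))
      = ∑ i, ∑ q ∈ S i, ∑ q' ∈ (S i).erase q, (H q).hadamard (H q') := by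
    rw [hsplit, hpart, ← Finset.sum_sub_distrib]
    refine Finset.sum_congr rfl fun i _ => ?_
    rw [hGdec i, hadamard_sum_sum, ← Finset.sum_sub_distrib]
    refine Finset.sum_congr rfl fun q hq => ?_
    rw [← Finset.add_sum_erase _ _ hq, add_sub_cancel_left]
  rw [hmain]
  refine posSemidef_sum' _ _ fun i _ => posSemidef_sum' _ _ fun q _ =>
    posSemidef_sum' _ _ fun q' _ => schur_psd (hHpsd q) (hHpsd q')
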